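/- If α is a Salem number with minimal polynomial P_α over ℚ, then P_α(-X²) is (up to sign/normalization) the minimal polynomial of a complex Salem number β with |β|² = α, and in particular M(P_α(-X²)) = M(P_α). -/

import Mathlib

/-- Mahler measure of a complex polynomial. -/
noncomputable def mahlerMeasure (P : Polynomial ℂ) : ℝ :=
  (P.roots.map (fun z => max 1 (‖z‖))).prod

/-- A Salem number: a real algebraic integer `α > 1` all of whose other complex
conjugates have absolute value ≤ 1, with at least one of absolute value 1. -/
def IsSalemNumber (α : ℝ) : Prop :=
  1 < α ∧ IsIntegral ℤ α ∧
  (∀ z ∈ ((minpoly ℚ α).map (algebraMap ℚ ℂ)).roots, z ≠ (α : ℂ) → ‖z‖ ≤ 1) ∧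
  (∃ z ∈ ((minpoly ℚ α).map (algebraMap ℚ ℂ)).roots, ‖z‖ = 1)

/-- A complex Salem number: a non-real algebraic integer `β` such that `β` and its
complex conjugate are the only conjugates of absolute value > 1, with at least one
conjugate of absolute value 1. -/
def IsComplexSalemNumber (β : ℂ) : Prop :=
  β.im ≠ 0 ∧ IsIntegral ℤ β ∧
  (∀ z ∈ ((minpoly ℚ β).map (algebraMap ℚ ℂ)).roots,
      1 < ‖z‖ → z = β ∨ z = (starRingEnd ℂ) β) ∧
  (∃ z ∈ ((minpoly ℚ β).map (algebraMap ℚ ℂ)).roots, ‖z‖ = 1)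

namespace SalemAux

open Polynomial

variable {α : ℝ}

theorem hQint (h : IsSalemNumber α) : IsIntegral ℚ α := h.2.1.tower_top

theorem mem_roots_iff (h : IsSalemNumber α) {z : ℂ} :
    z ∈ ((minpoly ℚ α).map (algebraMap ℚ ℂ)).roots ↔ aeval z (minpoly ℚ α) = 0 := by
  rw [Polynomial.mem_roots_map (minpoly.ne_zero (hQint h)), Polynomial.aeval_def]

theorem root_alpha (h : IsSalemNumber α) :
    ((α : ℂ)) ∈ ((minpoly ℚ α).map (algebraMap ℚ ℂ)).roots := by
  rw [mem_roots_iff h]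
  have hc : ((α : ℂ)) = algebraMap ℝ ℂ α := rfl
  rw [hc, Polynomial.aeval_algebraMap_apply, minpoly.aeval, map_zero]

theorem root_conj (h : IsSalemNumber α) {z : ℂ}
    (hz : z ∈ ((minpoly ℚ α).map (algebraMap ℚ ℂ)).roots) :
    (starRingEnd ℂ) z ∈ ((minpoly ℚ α).map (algebraMap ℚ ℂ)).roots := by
  rw [mem_roots_iff h, aeval_def] at hz ⊢
  have key : ((starRingEnd ℂ).comp (algebraMap ℚ ℂ)) = algebraMap ℚ ℂ :=
    Subsingleton.elim _ _
  have h2 := Polynomial.hom_eval₂ (minpoly ℚ α) (algebraMap ℚ ℂ) (starRingEnd ℂ) z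
  rw [hz, map_zero, key] at h2
  exact h2.symm

theorem eq_of_rat_root (h : IsSalemNumber α) {r : ℚ}
    (hr : aeval ((r : ℚ) : ℂ) (minpoly ℚ α) = 0) : α = (r : ℝ) := by
  have h1 : Polynomial.eval r (minpoly ℚ α) = 0 := by
    have hc : (((r : ℚ)) : ℂ) = algebraMap ℚ ℂ r := by simp
    rw [hc, Polynomial.aeval_algebraMap_apply] at hr
    have := (map_eq_zero_iff (algebraMap ℚ ℂ) (algebraMap ℚ ℂ).injective).mp hr
    simpa using this
  have h2 : (X - C r) ∣ minpoly ℚ α := dvd_iff_isRoot.mpr h1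
  have h3 : minpoly ℚ α = X - C r :=
    Polynomial.eq_of_monic_of_associated (minpoly.monic (hQint h)) (monic_X_sub_C r)
      (((irreducible_X_sub_C r).associated_of_dvd (minpoly.irreducible (hQint h)) h2).symm)
  have h4 := minpoly.aeval ℚ α
  rw [h3] at h4
  simp only [map_sub, aeval_X, aeval_C] at h4
  have : α - (r : ℝ) = 0 := by simpa using h4
  linarith

theorem not_root_one (h : IsSalemNumber α) : aeval (1 : ℂ) (minpoly ℚ α) ≠ 0 := by
  intro hc
  have := eq_of_rat_root h (r := 1) (by simpa using hc)
  simp at this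
  linarith [h.1]

theorem not_root_neg_one (h : IsSalemNumber α) : aeval (-1 : ℂ) (minpoly ℚ α) ≠ 0 := by
  intro hc
  have := eq_of_rat_root h (r := -1) (by push_cast; simpa using hc)
  rw [this] at h
  have := h.1
  norm_num at this

theorem root_ne_zero (h : IsSalemNumber α) {z : ℂ}
    (hz : z ∈ ((minpoly ℚ α).map (algebraMap ℚ ℂ)).roots) : z ≠ 0 := by
  rintro rfl
  rw [mem_roots_iff h, aeval_def, eval₂_at_zero] at hz
  have h0 : (minpoly ℚ α).coeff 0 = 0 :=
    (map_eq_zero_iff (algebraMap ℚ ℂ) (algebraMap ℚ ℂ).injective).mp hz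
  exact minpoly.coeff_zero_ne_zero (hQint h) (by intro e; rw [e] at h; linarith [h.1]) h0

theorem dvd_reverse (h : IsSalemNumber α) : minpoly ℚ α ∣ (minpoly ℚ α).reverse := by
  obtain ⟨z₀, hz₀, habs⟩ := h.2.2.2
  have hz0 : z₀ ≠ 0 := by
    intro e; rw [e] at habs; simp at habs
  have hmin : minpoly ℚ z₀ = minpoly ℚ α :=
    (minpoly.eq_of_irreducible_of_monic (minpoly.irreducible (hQint h))
      ((mem_roots_iff h).mp hz₀) (minpoly.monic (hQint h))).symm
  have hconj : aeval ((starRingEnd ℂ) z₀) (minpoly ℚ α) = 0 :=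
    (mem_roots_iff h).mp (root_conj h hz₀)
  have hinv : z₀⁻¹ = (starRingEnd ℂ) z₀ :=
    RCLike.inv_eq_conj habs
  have hrev : aeval z₀ (minpoly ℚ α).reverse = 0 := by
    letI : Invertible (z₀⁻¹) := invertibleOfNonzero (inv_ne_zero hz0)
    have iff1 := Polynomial.eval₂_reverse_eq_zero_iff (algebraMap ℚ ℂ) (z₀⁻¹) (minpoly ℚ α)
    rw [invOf_eq_inv, inv_inv] at iff1
    rw [aeval_def, iff1, ← aeval_def, hinv]
    exact hconj
  have hdvd := minpoly.dvd ℚ z₀ hrev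
  rwa [hmin] at hdvd

theorem reverse_eq (h : IsSalemNumber α) :
    ∃ c : ℚ, c ≠ 0 ∧ (minpoly ℚ α).reverse = C c * minpoly ℚ α := by
  obtain ⟨q, hq⟩ := dvd_reverse h
  have hP0 : minpoly ℚ α ≠ 0 := minpoly.ne_zero (hQint h)
  have hrev0 : (minpoly ℚ α).reverse ≠ 0 := by
    rw [Ne, Polynomial.reverse_eq_zero]; exact hP0
  have hq0 : q ≠ 0 := by rintro rfl; rw [mul_zero] at hq; exact hrev0 hq
  have hdeg : (minpoly ℚ α).natDegree + q.natDegree ≤ (minpoly ℚ α).natDegree := by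
    rw [← Polynomial.natDegree_mul hP0 hq0, ← hq]
    exact Polynomial.reverse_natDegree_le _
  have hdq : q.natDegree = 0 := by omega
  refine ⟨q.coeff 0, ?_, ?_⟩
  · intro e
    apply hq0
    rw [Polynomial.eq_C_of_natDegree_eq_zero hdq, e, map_zero]
  · rw [hq]
    conv_lhs => rw [Polynomial.eq_C_of_natDegree_eq_zero hdq]
    ring

theorem root_inv (h : IsSalemNumber α) {z : ℂ}
    (hz : z ∈ ((minpoly ℚ α).map (algebraMap ℚ ℂ)).roots) :
    z⁻¹ ∈ ((minpoly ℚ α).map (algebraMap ℚ ℂ)).roots := by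
  have hz0 := root_ne_zero h hz
  obtain ⟨c, hc, hrev⟩ := reverse_eq h
  rw [mem_roots_iff h] at hz ⊢
  letI : Invertible z := invertibleOfNonzero hz0
  have iff1 := Polynomial.eval₂_reverse_eq_zero_iff (algebraMap ℚ ℂ) z (minpoly ℚ α)
  rw [invOf_eq_inv] at iff1
  have h2 : eval₂ (algebraMap ℚ ℂ) z⁻¹ (minpoly ℚ α).reverse = 0 :=
    iff1.mpr (by rwa [aeval_def] at hz)
  rw [hrev, eval₂_mul, eval₂_C] at h2
  rw [aeval_def]
  rcases mul_eq_zero.mp h2 with h3 | h3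
  · exact absurd ((map_eq_zero_iff (algebraMap ℚ ℂ) (algebraMap ℚ ℂ).injective).mp h3) hc
  · exact h3

theorem root_abs_gt (h : IsSalemNumber α) {z : ℂ}
    (hz : z ∈ ((minpoly ℚ α).map (algebraMap ℚ ℂ)).roots) (h1 : 1 < ‖z‖) :
    z = (α : ℂ) := by
  by_contra hne
  exact absurd (h.2.2.1 z hz hne) (not_le.mpr h1)

theorem real_root (h : IsSalemNumber α) {z : ℂ}
    (hz : z ∈ ((minpoly ℚ α).map (algebraMap ℚ ℂ)).roots) (him : z.im = 0) :
    z = (α : ℂ) ∨ z = ((α : ℂ))⁻¹ := by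
  by_cases hzα : z = (α : ℂ)
  · exact Or.inl hzα
  right
  have hle : ‖z‖ ≤ 1 := h.2.2.1 z hz hzα
  have hne1 : ‖z‖ ≠ 1 := by
    intro habs
    have hre : z = ((z.re : ℝ) : ℂ) := by
      apply Complex.ext <;> simp [him]
    have habs' : |z.re| = 1 := by
      rw [hre, Complex.norm_real, Real.norm_eq_abs] at habs; exact habs
    rcases abs_eq (by norm_num : (0:ℝ) ≤ 1) |>.mp habs' with h1 | h1
    · apply not_root_one h
      rw [← (mem_roots_iff h).mp hz, hre, h1]; norm_num
    · apply not_root_neg_one h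
      rw [← (mem_roots_iff h).mp hz, hre, h1]; norm_num
  have hlt : ‖z‖ < 1 := lt_of_le_of_ne hle hne1
  have hz0 : z ≠ 0 := root_ne_zero h hz
  have habspos : 0 < ‖z‖ := by
    simpa using hz0
  have hgt : 1 < ‖z⁻¹‖ := by
    rw [norm_inv]
    exact (one_lt_inv₀ habspos).mpr hlt
  have := root_abs_gt h (root_inv h hz) hgt
  rw [← this, inv_inv]

theorem root_inv_alpha (h : IsSalemNumber α) :
    ((α : ℂ))⁻¹ ∈ ((minpoly ℚ α).map (algebraMap ℚ ℂ)).roots :=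
  root_inv h (root_alpha h)

end SalemAux
namespace SalemAux

open Polynomial

variable {α : ℝ}

theorem natDegree_even (h : IsSalemNumber α) : Even (minpoly ℚ α).natDegree := by
  classical
  set Pc := (minpoly ℚ α).map (algebraMap ℚ ℂ) with hPc
  have hsep : (minpoly ℚ α).Separable := (minpoly.irreducible (hQint h)).separable
  have hnodup : Pc.roots.Nodup := nodup_roots (hsep.map)
  have hcard : Multiset.card Pc.roots = (minpoly ℚ α).natDegree :=
    by rw [← (IsAlgClosed.splits Pc).natDegree_eq_card_roots, hPc, natDegree_map]
  set F := Pc.roots.toFinset with hF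
  have hFcard : F.card = (minpoly ℚ α).natDegree := by
    rw [hF, Multiset.toFinset_card_of_nodup hnodup, hcard]
  have hmemF : ∀ z : ℂ, z ∈ F ↔ z ∈ Pc.roots := fun z => Multiset.mem_toFinset
  have hsplit := Finset.card_filter_add_card_filter_not (s := F)
    (fun z : ℂ => z.im = 0)
  have hA : F.filter (fun z : ℂ => z.im = 0) = {(α : ℂ), ((α : ℂ))⁻¹} := by
    ext z
    simp only [Finset.mem_filter, Finset.mem_insert, Finset.mem_singleton, hmemF]
    constructor
    · rintro ⟨hz, him⟩
      exact real_root h hz him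
    · rintro (rfl | rfl)
      · exact ⟨root_alpha h, by simp⟩
      · refine ⟨root_inv_alpha h, ?_⟩
        rw [← Complex.ofReal_inv]
        simp
  have hαne : ((α : ℂ)) ≠ ((α : ℂ))⁻¹ := by
    intro e
    rw [← Complex.ofReal_inv] at e
    have e2 : α = α⁻¹ := by exact_mod_cast e
    have hα1 := h.1
    have hαpos : (0:ℝ) < α := by linarith
    have hmul : α * α⁻¹ = 1 := mul_inv_cancel₀ (ne_of_gt hαpos)
    rw [← e2] at hmul
    nlinarith
  have hAcard : (F.filter (fun z : ℂ => z.im = 0)).card = 2 := by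
    rw [hA, Finset.card_insert_of_notMem (by simp only [Finset.mem_singleton]; exact hαne), Finset.card_singleton]
  have hBcard : (F.filter (fun z : ℂ => ¬ z.im = 0)).card
      = 2 * (F.filter (fun z : ℂ => 0 < z.im)).card := by
    have hun : F.filter (fun z : ℂ => ¬ z.im = 0)
        = F.filter (fun z : ℂ => 0 < z.im) ∪ F.filter (fun z : ℂ => z.im < 0) := by
      rw [← Finset.filter_or]
      apply Finset.filter_congr
      intro z _
      constructor
      · intro hne
        rcases lt_or_gt_of_ne hne with h1 | h1
        · exact Or.inr h1
        · exact Or.inl h1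
      · rintro (h1 | h1) <;> intro e <;> rw [e] at h1 <;> exact absurd h1 (by norm_num)
    have hdisj : Disjoint (F.filter (fun z : ℂ => 0 < z.im))
        (F.filter (fun z : ℂ => z.im < 0)) := by
      rw [Finset.disjoint_left]
      intro z hz1 hz2
      rw [Finset.mem_filter] at hz1 hz2
      linarith [hz1.2, hz2.2]
    have hbij : (F.filter (fun z : ℂ => 0 < z.im)).card
        = (F.filter (fun z : ℂ => z.im < 0)).card := by
      apply Finset.card_bij' (fun z _ => (starRingEnd ℂ) z) (fun z _ => (starRingEnd ℂ) z)
      · intro a ha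
        rw [Finset.mem_filter] at ha ⊢
        exact ⟨(hmemF _).mpr (root_conj h ((hmemF _).mp ha.1)), by
          simp only [Complex.conj_im]; linarith [ha.2]⟩
      · intro a ha
        rw [Finset.mem_filter] at ha ⊢
        exact ⟨(hmemF _).mpr (root_conj h ((hmemF _).mp ha.1)), by
          simp only [Complex.conj_im]; linarith [ha.2]⟩
      · intro a _; simp
      · intro a _; simp
    rw [hun, Finset.card_union_of_disjoint hdisj, ← hbij]
    ring
  refine ⟨1 + (F.filter (fun z : ℂ => 0 < z.im)).card, by omega⟩

end SalemAux
namespace SalemAux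

open Polynomial IntermediateField

variable {α : ℝ}

theorem beta_sq (h : IsSalemNumber α) :
    ((Real.sqrt α : ℝ) : ℂ) * Complex.I * (((Real.sqrt α : ℝ) : ℂ) * Complex.I) = -(α : ℂ) := by
  have hα0 : (0:ℝ) ≤ α := by linarith [h.1]
  have : ((Real.sqrt α : ℝ) : ℂ) * ((Real.sqrt α : ℝ) : ℂ) = (α : ℂ) := by
    rw [← Complex.ofReal_mul, Real.mul_self_sqrt hα0]
  calc ((Real.sqrt α : ℝ) : ℂ) * Complex.I * (((Real.sqrt α : ℝ) : ℂ) * Complex.I)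
      = ((Real.sqrt α : ℝ) : ℂ) * ((Real.sqrt α : ℝ) : ℂ) * (Complex.I * Complex.I) := by ring
    _ = -(α : ℂ) := by rw [Complex.I_mul_I, this]; ring

theorem beta_pow_sq (h : IsSalemNumber α) :
    (((Real.sqrt α : ℝ) : ℂ) * Complex.I) ^ 2 = -(α : ℂ) := by
  rw [sq]; exact beta_sq h

theorem beta_int (h : IsSalemNumber α) :
    IsIntegral ℤ (((Real.sqrt α : ℝ) : ℂ) * Complex.I) := by
  apply IsIntegral.of_pow (n := 2) (by norm_num)
  rw [beta_pow_sq h]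
  exact (h.2.1.map (Complex.ofRealHom.toIntAlgHom)).neg

theorem aeval_beta (h : IsSalemNumber α) :
    aeval (((Real.sqrt α : ℝ) : ℂ) * Complex.I) ((minpoly ℚ α).comp (-(X ^ 2))) = 0 := by
  rw [aeval_comp]
  have h1 : aeval (((Real.sqrt α : ℝ) : ℂ) * Complex.I) (-(X ^ 2) : ℚ[X]) = (α : ℂ) := by
    simp only [map_neg, map_pow, aeval_X]
    rw [beta_pow_sq h]; ring
  rw [h1]
  have hc : ((α : ℂ)) = algebraMap ℝ ℂ α := rfl
  rw [hc, Polynomial.aeval_algebraMap_apply, minpoly.aeval, map_zero]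

theorem natDegree_Q (h : IsSalemNumber α) :
    ((minpoly ℚ α).comp (-(X ^ 2))).natDegree = 2 * (minpoly ℚ α).natDegree := by
  rw [natDegree_comp]
  have : ((-(X ^ 2) : ℚ[X])).natDegree = 2 := by
    rw [natDegree_neg, natDegree_X_pow]
  rw [this]; ring

theorem Q_ne_zero (h : IsSalemNumber α) : (minpoly ℚ α).comp (-(X ^ 2)) ≠ (0 : ℚ[X]) := by
  intro e
  have h1 := natDegree_Q h
  rw [e, natDegree_zero] at h1
  have := minpoly.natDegree_pos (hQint h)
  omega

theorem Q_monic (h : IsSalemNumber α) : ((minpoly ℚ α).comp (-(X ^ 2))).Monic := by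
  unfold Monic
  rw [Polynomial.leadingCoeff_comp (by rw [natDegree_neg, natDegree_X_pow]; norm_num)]
  rw [(minpoly.monic (hQint h)).leadingCoeff]
  have hlc : ((-(X ^ 2) : ℚ[X])).leadingCoeff = -1 := by
    rw [leadingCoeff_neg]
    have : ((X ^ 2 : ℚ[X])).leadingCoeff = 1 := monic_X_pow 2
    rw [this]
  rw [hlc, one_mul]
  exact (natDegree_even h).neg_one_pow

theorem minpoly_beta (h : IsSalemNumber α) :
    minpoly ℚ (((Real.sqrt α : ℝ) : ℂ) * Complex.I) = (minpoly ℚ α).comp (-(X ^ 2)) := by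
  set β := ((Real.sqrt α : ℝ) : ℂ) * Complex.I with hβ
  set n := (minpoly ℚ α).natDegree with hn
  have hnpos : 0 < n := minpoly.natDegree_pos (hQint h)
  have hβQ : IsIntegral ℚ β := (beta_int h).tower_top
  have hdvd : minpoly ℚ β ∣ (minpoly ℚ α).comp (-(X ^ 2)) := minpoly.dvd ℚ β (aeval_beta h)
  -- degree of minpoly ℚ β is 2n
  have hαℂint : IsIntegral ℚ ((α : ℂ)) :=
    ((h.2.1.map (Complex.ofRealHom.toIntAlgHom)).tower_top : IsIntegral ℚ ((α : ℂ)))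
  have hminα : minpoly ℚ ((α : ℂ)) = minpoly ℚ α := by
    have hc : ((α : ℂ)) = algebraMap ℝ ℂ α := rfl
    rw [hc, minpoly.algebraMap_eq (algebraMap ℝ ℂ).injective]
  haveI : FiniteDimensional ℚ ℚ⟮(α : ℂ)⟯ := adjoin.finiteDimensional hαℂint
  haveI : FiniteDimensional ℚ ℚ⟮β⟯ := adjoin.finiteDimensional hβQ
  have hK : Module.finrank ℚ ℚ⟮(α : ℂ)⟯ = n := by
    rw [adjoin.finrank hαℂint, hminα]
  have hKβ : Module.finrank ℚ ℚ⟮β⟯ = (minpoly ℚ β).natDegree := adjoin.finrank hβQ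
  have hle : ℚ⟮(α : ℂ)⟯ ≤ ℚ⟮β⟯ := by
    rw [adjoin_simple_le_iff]
    have : ((α : ℂ)) = -(β ^ 2) := by rw [beta_pow_sq h]; ring
    rw [this]
    exact neg_mem (pow_mem (mem_adjoin_simple_self ℚ β) 2)
  have hdvd2 : n ∣ Module.finrank ℚ ℚ⟮β⟯ := by
    have := IntermediateField.finrank_bot_mul_relfinrank hle
    rw [hK] at this
    exact Dvd.intro _ this
  have hdle : (minpoly ℚ β).natDegree ≤ 2 * n := by
    have := Polynomial.natDegree_le_of_dvd hdvd (Q_ne_zero h)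
    rwa [natDegree_Q h] at this
  -- β is not in ℚ⟮(α : ℂ)⟯ because that field is real
  have hβim : β.im = Real.sqrt α := by simp [hβ]
  have hβim0 : β.im ≠ 0 := by
    rw [hβim]
    have : 0 < Real.sqrt α := Real.sqrt_pos.mpr (by linarith [h.1])
    linarith
  have hβnot : β ∉ ℚ⟮(α : ℂ)⟯ := by
    intro hβK
    have hsub : ℚ⟮(α : ℂ)⟯ ≤ Subfield.toIntermediateField (K := ℚ)
        (Complex.ofRealHom.fieldRange)
        (fun q => ⟨(q : ℝ), by simp⟩) := by
      rw [adjoin_simple_le_iff]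
      exact ⟨α, rfl⟩
    obtain ⟨r, hr⟩ := hsub hβK
    apply hβim0
    rw [← hr]
    simp
  have hdeg : (minpoly ℚ β).natDegree = 2 * n := by
    obtain ⟨k, hk⟩ := hdvd2
    have hfinpos : 0 < Module.finrank ℚ ℚ⟮β⟯ := Module.finrank_pos
    have hkpos : 0 < k := by
      rcases Nat.eq_zero_or_pos k with rfl | hp
      · rw [mul_zero] at hk; omega
      · exact hp
    have hk2 : k ≤ 2 := by
      by_contra hc
      push_neg at hc
      have : 2 * n < n * k := by
        have := Nat.mul_le_mul_left n hc
        nlinarith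
      omega
    interval_cases k
    · exfalso
      have heq : ℚ⟮(α : ℂ)⟯ = ℚ⟮β⟯ := by
        apply IntermediateField.eq_of_le_of_finrank_eq hle
        rw [hK, hk, mul_one]
      apply hβnot
      rw [heq]
      exact mem_adjoin_simple_self ℚ β
    · omega
  -- conclude
  obtain ⟨q, hq⟩ := hdvd
  have hQ0 := Q_ne_zero h
  have hq0 : q ≠ 0 := by rintro rfl; rw [mul_zero] at hq; exact hQ0 hq
  have hm0 : minpoly ℚ β ≠ 0 := minpoly.ne_zero hβQ
  have hqdeg : q.natDegree = 0 := by
    have := natDegree_Q h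
    rw [hq, Polynomial.natDegree_mul hm0 hq0, hdeg] at this
    omega
  have hql : q = C (q.coeff 0) := Polynomial.eq_C_of_natDegree_eq_zero hqdeg
  have hlc : q.coeff 0 = 1 := by
    have h1 := Q_monic h
    unfold Monic at h1
    rw [hq, leadingCoeff_mul, (minpoly.monic hβQ).leadingCoeff, one_mul] at h1
    rw [hql] at h1
    simpa using h1
  rw [hq, hql, hlc, map_one, mul_one]

end SalemAux
namespace SalemAux

open Polynomial

variable {α : ℝ}

theorem mem_roots_Q (h : IsSalemNumber α) {w : ℂ} :
    w ∈ (((minpoly ℚ α).comp (-(X ^ 2))).map (algebraMap ℚ ℂ)).roots ↔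
      -(w ^ 2) ∈ ((minpoly ℚ α).map (algebraMap ℚ ℂ)).roots := by
  rw [Polynomial.mem_roots_map (Q_ne_zero h), ← aeval_def, aeval_comp]
  have h1 : aeval w (-(X ^ 2) : ℚ[X]) = -(w ^ 2) := by simp
  rw [h1, mem_roots_iff h]

theorem roots_Q_gt (h : IsSalemNumber α) {w : ℂ}
    (hw : w ∈ (((minpoly ℚ α).comp (-(X ^ 2))).map (algebraMap ℚ ℂ)).roots)
    (h1 : 1 < ‖w‖) :
    w = ((Real.sqrt α : ℝ) : ℂ) * Complex.I ∨ w = -(((Real.sqrt α : ℝ) : ℂ) * Complex.I) := by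
  have h2 := (mem_roots_Q h).mp hw
  have habs : 1 < ‖-(w ^ 2)‖ := by
    rw [norm_neg, norm_pow]
    nlinarith
  have h3 := root_abs_gt h h2 habs
  have h4 : w ^ 2 = (((Real.sqrt α : ℝ) : ℂ) * Complex.I) ^ 2 := by
    rw [beta_pow_sq h]
    have : w ^ 2 = -(α : ℂ) := by
      have := congrArg (fun x : ℂ => -x) h3
      simpa using this
    exact this
  have h5 : (w - ((Real.sqrt α : ℝ) : ℂ) * Complex.I) *
      (w + ((Real.sqrt α : ℝ) : ℂ) * Complex.I) = 0 := by
    linear_combination h4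
  rcases mul_eq_zero.mp h5 with h6 | h6
  · exact Or.inl (sub_eq_zero.mp h6)
  · exact Or.inr (eq_neg_of_add_eq_zero_left h6)

theorem roots_Q_exists (h : IsSalemNumber α) :
    ∃ w ∈ (((minpoly ℚ α).comp (-(X ^ 2))).map (algebraMap ℚ ℂ)).roots,
      ‖w‖ = 1 := by
  obtain ⟨z₀, hz₀, habs⟩ := h.2.2.2
  obtain ⟨w, hw2⟩ := IsAlgClosed.exists_pow_nat_eq (k := ℂ) (-z₀) (n := 2) (by norm_num)
  refine ⟨w, ?_, ?_⟩
  · rw [mem_roots_Q h, hw2, neg_neg]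
    exact hz₀
  · have h2 : ‖w‖ ^ 2 = 1 := by
      rw [← norm_pow, hw2, norm_neg, habs]
    have h4 := Real.sqrt_sq (norm_nonneg w)
    rw [h2, Real.sqrt_one] at h4
    exact h4.symm

theorem mahler_eq (h : IsSalemNumber α) :
    _root_.mahlerMeasure (((minpoly ℚ α).comp (-(X ^ 2))).map (algebraMap ℚ ℂ))
      = _root_.mahlerMeasure ((minpoly ℚ α).map (algebraMap ℚ ℂ)) := by
  classical
  set Pc := (minpoly ℚ α).map (algebraMap ℚ ℂ) with hPcdef
  have hmonic : Pc.Monic := (minpoly.monic (hQint h)).map _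
  have hsplits : Pc = (Pc.roots.map fun a => X - C a).prod :=
    (IsAlgClosed.splits Pc).eq_prod_roots_of_monic hmonic
  choose s hs using fun z : ℂ =>
    IsAlgClosed.exists_pow_nat_eq (k := ℂ) (-z) (n := 2) (by norm_num)
  have heach : ∀ a : ℂ,
      (X - C a).comp (-(X ^ 2)) = -1 * ((X - C (s a)) * (X - C (-(s a)))) := by
    intro a
    have h2 : (C (s a) : ℂ[X]) ^ 2 = -(C a) := by
      rw [← map_pow, hs a, map_neg]
    rw [sub_comp, X_comp, C_comp, map_neg]
    linear_combination -h2
  set Qc := (((minpoly ℚ α).comp (-(X ^ 2))).map (algebraMap ℚ ℂ)) with hQcdef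
  have hQc : Qc = Pc.comp (-(X ^ 2)) := by
    rw [hQcdef, Polynomial.map_comp, hPcdef]
    simp
  have hcardn : Multiset.card Pc.roots = (minpoly ℚ α).natDegree :=
    by rw [← (IsAlgClosed.splits Pc).natDegree_eq_card_roots, hPcdef, natDegree_map]
  have key : Qc = (Pc.roots.map fun a => (X - C (s a)) * (X - C (-(s a)))).prod := by
    rw [hQc]
    conv_lhs => rw [hsplits]
    rw [multiset_prod_comp, Multiset.map_map]
    have hmc : Multiset.map ((fun p : ℂ[X] => p.comp (-(X ^ 2))) ∘ fun a : ℂ => X - C a)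
        Pc.roots
        = Multiset.map (fun a : ℂ => -1 * ((X - C (s a)) * (X - C (-(s a))))) Pc.roots :=
      Multiset.map_congr rfl (fun a _ => heach a)
    rw [hmc, Multiset.prod_map_mul]
    have hconst : (Pc.roots.map fun _ : ℂ => (-1 : ℂ[X])).prod
        = (-1) ^ (minpoly ℚ α).natDegree := by
      rw [Multiset.map_const', Multiset.prod_replicate, hcardn]
    rw [hconst, (natDegree_even h).neg_one_pow, one_mul]
  have hfacne : (0 : ℂ[X]) ∉ Pc.roots.map fun a => (X - C (s a)) * (X - C (-(s a))) := by
    intro hmem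
    rw [Multiset.mem_map] at hmem
    obtain ⟨a, _, ha⟩ := hmem
    exact ((monic_X_sub_C (s a)).mul (monic_X_sub_C (-(s a)))).ne_zero ha
  have hroots : Qc.roots = Pc.roots.bind fun a => {s a, -(s a)} := by
    rw [key, roots_multiset_prod _ hfacne, Multiset.bind_map]
    apply Multiset.bind_congr
    intro a _
    rw [roots_mul (mul_ne_zero (X_sub_C_ne_zero (s a)) (X_sub_C_ne_zero (-(s a)))),
      roots_X_sub_C, roots_X_sub_C]
    rfl
  show (Qc.roots.map fun z => max 1 (‖z‖)).prod
      = (Pc.roots.map fun z => max 1 (‖z‖)).prod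
  rw [hroots, Multiset.map_bind, Multiset.prod_bind]
  apply congrArg Multiset.prod
  apply Multiset.map_congr rfl
  intro a _
  simp only [Multiset.insert_eq_cons, Multiset.map_cons, Multiset.map_singleton,
    Multiset.prod_cons, Multiset.prod_singleton]
  rw [norm_neg]
  have ht2 : ‖s a‖ * ‖s a‖ = ‖a‖ := by
    rw [← norm_mul, ← sq, hs a, norm_neg]
  rcases le_or_gt (‖s a‖) 1 with hle | hlt
  · rw [max_eq_left hle,
      max_eq_left (by nlinarith [norm_nonneg (s a), norm_nonneg a])]
    ring
  · rw [max_eq_right hlt.le, max_eq_right (by nlinarith : (1:ℝ) ≤ ‖a‖), ht2]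

end SalemAux

open SalemAux in
/-- If α is a Salem number with minimal polynomial P, then P(-X²) is the minimal
polynomial of a complex Salem number β with |β|² = α, and in particular
M(P(-X²)) = M(P). -/
theorem salem_to_complex_salem (α : ℝ) (h : IsSalemNumber α) :
    ∃ β : ℂ, IsComplexSalemNumber β ∧ ‖β‖ ^ 2 = α ∧
      minpoly ℚ β = (minpoly ℚ α).comp (-(Polynomial.X ^ 2)) ∧
      mahlerMeasure (((minpoly ℚ α).comp (-(Polynomial.X ^ 2))).map (algebraMap ℚ ℂ))
        = mahlerMeasure ((minpoly ℚ α).map (algebraMap ℚ ℂ)) := by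
  have hα0 : (0:ℝ) < α := lt_trans one_pos h.1
  have hsq : 0 < Real.sqrt α := Real.sqrt_pos.mpr hα0
  refine ⟨((Real.sqrt α : ℝ) : ℂ) * Complex.I, ⟨?_, beta_int h, ?_, ?_⟩, ?_,
    minpoly_beta h, mahler_eq h⟩
  · simp only [Complex.mul_im, Complex.ofReal_re, Complex.I_im, Complex.ofReal_im,
      Complex.I_re, mul_one, mul_zero, add_zero]
    linarith
  · intro z hz h1
    rw [minpoly_beta h] at hz
    have hconj : (starRingEnd ℂ) (((Real.sqrt α : ℝ) : ℂ) * Complex.I)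
        = -(((Real.sqrt α : ℝ) : ℂ) * Complex.I) := by
      rw [map_mul, Complex.conj_ofReal, Complex.conj_I]
      ring
    rw [hconj]
    exact roots_Q_gt h hz h1
  · rw [minpoly_beta h]
    exact roots_Q_exists h
  · rw [norm_mul, Complex.norm_real, Real.norm_eq_abs, Complex.norm_I, mul_one,
      abs_of_nonneg (Real.sqrt_nonneg α), Real.sq_sqrt (le_of_lt hα0)]
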